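/- Suppose for each α there exist countable (or arbitrary) families C^{S2}_α ⊆ C_b(S2) and C^{S1}_α ⊆ C_b(S1) of bounded continuous functions generating the sub-σ-algebras B^{S2}_α = σ(g : g ∈ C^{S2}_α) and B^{S1}_α = σ(g : g ∈ C^{S1}_α). Let (X_n, Y) be random variables in S1×S2 such that each X_n is C-compatible with Y, and suppose (X_n, Y) converges in distribution to (X, Y) (with the same Y-marginal ν throughout). Then X is C-compatible with Y. -/

import Mathlib

open MeasureTheory ProbabilityTheory MeasurableSpace Filter
open scoped BoundedContinuousFunction



section Aux

variable {S1 S2 : Type} [mS1 : MeasurableSpace S1] [mS2 : MeasurableSpace S2]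

lemma condexp_snd_aux (ν : Measure S2) [IsProbabilityMeasure ν]
    {A : Type} (B2 : A → MeasurableSpace S2) (α : A) (hm2 : B2 α ≤ mS2)
    (ρ : Measure (S1 × S2)) [IsProbabilityMeasure ρ] (hρ : ρ.map Prod.snd = ν)
    (h : S2 → ℝ) (hh : Integrable h ν) :
    ρ[fun p => h p.2 | MeasurableSpace.comap Prod.snd (B2 α)]
      =ᵐ[ρ] fun p => (ν[h|B2 α]) p.2 := by
  have hm : MeasurableSpace.comap Prod.snd (B2 α) ≤ (inferInstance : MeasurableSpace (S1 × S2)) :=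
    (MeasurableSpace.comap_mono hm2).trans (measurable_iff_comap_le.mp measurable_snd)
  have hh' : Integrable h (ρ.map Prod.snd) := hρ ▸ hh
  have hint : Integrable (fun p : S1 × S2 => h p.2) ρ :=
    (integrable_map_measure (hρ ▸ hh.aestronglyMeasurable) measurable_snd.aemeasurable).mp hh'
  have hcond : Integrable (ν[h|B2 α]) ν := integrable_condExp
  have hcond' : Integrable (ν[h|B2 α]) (ρ.map Prod.snd) := hρ ▸ hcond
  have hgint : Integrable (fun p : S1 × S2 => (ν[h|B2 α]) p.2) ρ :=
    (integrable_map_measure (hρ ▸ hcond.aestronglyMeasurable) measurable_snd.aemeasurable).mp hcond'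
  refine (ae_eq_condExp_of_forall_setIntegral_eq hm hint
    (fun s _ _ => hgint.integrableOn) ?_ ?_).symm
  · rintro s ⟨t, ht, rfl⟩ -
    have htm : MeasurableSet t := hm2 t ht
    have e1 : ∫ p in Prod.snd ⁻¹' t, (ν[h|B2 α]) p.2 ∂ρ = ∫ y in t, (ν[h|B2 α]) y ∂ν := by
      rw [← hρ, setIntegral_map htm (hρ ▸ hcond.aestronglyMeasurable) measurable_snd.aemeasurable]
    have e2 : ∫ p in Prod.snd ⁻¹' t, h p.2 ∂ρ = ∫ y in t, h y ∂ν := by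
      rw [← hρ, setIntegral_map htm (hρ ▸ hh.aestronglyMeasurable) measurable_snd.aemeasurable]
    rw [e1, e2, setIntegral_condExp hm2 hh ht]
  · refine StronglyMeasurable.aestronglyMeasurable ?_
    exact (stronglyMeasurable_condExp (f := h) (m := B2 α) (μ := ν)).comp_measurable
      (measurable_iff_comap_le.mpr le_rfl)

end Aux


section Aux2

variable {S1 S2 : Type} [mS1 : MeasurableSpace S1] [mS2 : MeasurableSpace S2]

lemma int_snd_aux (ν : Measure S2) (ρ : Measure (S1 × S2)) (hρ : ρ.map Prod.snd = ν)
    (v : S2 → ℝ) (hv : Integrable v ν) : Integrable (fun p : S1 × S2 => v p.2) ρ :=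
  (integrable_map_measure (hρ ▸ hv.aestronglyMeasurable) measurable_snd.aemeasurable).mp (hρ ▸ hv)

lemma integral_snd_aux (ν : Measure S2) (ρ : Measure (S1 × S2)) (hρ : ρ.map Prod.snd = ν)
    (v : S2 → ℝ) (hv : AEStronglyMeasurable v ν) :
    ∫ p, v p.2 ∂ρ = ∫ y, v y ∂ν := by
  rw [← hρ, integral_map measurable_snd.aemeasurable (hρ ▸ hv)]

lemma intmul_aux (ν : Measure S2) (ρ : Measure (S1 × S2)) (hρ : ρ.map Prod.snd = ν)
    (v : S2 → ℝ) (hv : Integrable v ν) (u : S1 × S2 → ℝ) (hu : AEStronglyMeasurable u ρ)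
    (Cu : ℝ) (hbu : ∀ p, |u p| ≤ Cu) : Integrable (fun p => v p.2 * u p) ρ := by
  have h1 : Integrable (fun p : S1 × S2 => v p.2) ρ := int_snd_aux ν ρ hρ v hv
  have := h1.bdd_mul hu (Filter.Eventually.of_forall fun p => by simpa [Real.norm_eq_abs] using hbu p)
  simpa [mul_comm] using this

lemma bound_aux (ν : Measure S2) (ρ : Measure (S1 × S2)) (hρ : ρ.map Prod.snd = ν)
    (v : S2 → ℝ) (hv : Integrable v ν) (u : S1 × S2 → ℝ) (hu : AEStronglyMeasurable u ρ)
    (Cu : ℝ) (hCu : 0 ≤ Cu) (hbu : ∀ p, |u p| ≤ Cu) :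
    |∫ p, v p.2 * u p ∂ρ| ≤ Cu * ∫ y, |v y| ∂ν := by
  have h1 : Integrable (fun p : S1 × S2 => v p.2) ρ := int_snd_aux ν ρ hρ v hv
  have h2 : Integrable (fun p => v p.2 * u p) ρ := intmul_aux ν ρ hρ v hv u hu Cu hbu
  calc |∫ p, v p.2 * u p ∂ρ| ≤ ∫ p, |v p.2| * |u p| ∂ρ := by
        simpa [Real.norm_eq_abs, abs_mul] using
          norm_integral_le_integral_norm (μ := ρ) (fun p => v p.2 * u p)
    _ ≤ ∫ p, |v p.2| * Cu ∂ρ := by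
        have h2' : Integrable (fun p => |v p.2| * |u p|) ρ := by
          have := h2.abs
          simpa [abs_mul] using this
        refine integral_mono h2' (h1.abs.mul_const Cu) fun p => ?_
        exact mul_le_mul_of_nonneg_left (hbu p) (abs_nonneg _)
    _ = (∫ p, |v p.2| ∂ρ) * Cu := integral_mul_const Cu _
    _ = (∫ y, |v y| ∂ν) * Cu := by
        rw [integral_snd_aux ν ρ hρ (fun y => |v y|) hv.abs.aestronglyMeasurable]
    _ = Cu * ∫ y, |v y| ∂ν := mul_comm _ _

lemma psi_tendsto (aa r : ℝ) :
    Tendsto (fun k : ℕ => max 0 (min 1 ((k : ℝ) * (r - aa)))) atTop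
      (nhds (Set.indicator (Set.Ioi aa) (fun _ => (1 : ℝ)) r)) := by
  by_cases hr : aa < r
  · rw [Set.indicator_of_mem (show r ∈ Set.Ioi aa from hr)]
    have hpos : 0 < r - aa := sub_pos.mpr hr
    obtain ⟨N, hN⟩ := exists_nat_ge (1 / (r - aa))
    have hev : ∀ᶠ k : ℕ in atTop, max 0 (min 1 ((k : ℝ) * (r - aa))) = 1 := by
      filter_upwards [eventually_ge_atTop N] with k hk
      have h1 : (1 : ℝ) ≤ (k : ℝ) * (r - aa) := by
        have hkN : (1 : ℝ) / (r - aa) ≤ (k : ℝ) := hN.trans (Nat.cast_le.mpr hk)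
        calc (1 : ℝ) = (1 / (r - aa)) * (r - aa) := by field_simp
          _ ≤ (k : ℝ) * (r - aa) := mul_le_mul_of_nonneg_right hkN hpos.le
      rw [min_eq_left h1, max_eq_right zero_le_one]
    exact Tendsto.congr' (hev.mono fun k hk => hk.symm) tendsto_const_nhds
  · push_neg at hr
    rw [Set.indicator_of_notMem (show r ∉ Set.Ioi aa from fun hmem => absurd hmem (not_lt.mpr hr))]
    have hz : ∀ k : ℕ, max 0 (min 1 ((k : ℝ) * (r - aa))) = 0 := by
      intro k
      have hnp : (k : ℝ) * (r - aa) ≤ 0 :=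
        mul_nonpos_iff.mpr (Or.inl ⟨Nat.cast_nonneg k, sub_nonpos.mpr hr⟩)
      exact max_eq_left ((min_le_right _ _).trans hnp)
    exact Tendsto.congr (fun k => (hz k).symm) tendsto_const_nhds

end Aux2


lemma comap_eq_gen {β : Type} (q : β → ℝ) :
    MeasurableSpace.comap q (inferInstance : MeasurableSpace ℝ)
      = MeasurableSpace.generateFrom {s | ∃ a : ℝ, q ⁻¹' Set.Ioi a = s} := by
  rw [show (inferInstance : MeasurableSpace ℝ) = borel ℝ from rfl,
    borel_eq_generateFrom_Ioi, MeasurableSpace.comap_generateFrom]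
  congr 1
  ext s
  constructor
  · rintro ⟨r, ⟨a, rfl⟩, rfl⟩; exact ⟨a, rfl⟩
  · rintro ⟨a, rfl⟩; exact ⟨Set.Ioi a, ⟨a, rfl⟩, rfl⟩

section GEq

variable {S1 S2 : Type} [mS1 : MeasurableSpace S1] [mS2 : MeasurableSpace S2]

lemma G_eq (C1 : Set (S1 → ℝ)) (C2 : Set (S2 → ℝ)) :
    (MeasurableSpace.comap Prod.fst
        (⨆ g ∈ C1, MeasurableSpace.comap g (inferInstance : MeasurableSpace ℝ)) ⊔
      MeasurableSpace.comap Prod.snd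
        (⨆ g ∈ C2, MeasurableSpace.comap g (inferInstance : MeasurableSpace ℝ)))
      = MeasurableSpace.generateFrom (piiUnionInter
          (fun q : S1 × S2 → ℝ => {s | ∃ a : ℝ, q ⁻¹' Set.Ioi a = s})
          (((fun g : S1 → ℝ => g ∘ Prod.fst) '' C1) ∪ ((fun g : S2 → ℝ => g ∘ Prod.snd) '' C2))) := by
  refine le_antisymm (sup_le ?_ ?_) ?_
  · rw [MeasurableSpace.comap_iSup]
    refine iSup_le fun g => ?_
    rw [MeasurableSpace.comap_iSup]
    refine iSup_le fun hg => ?_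
    rw [MeasurableSpace.comap_comp, comap_eq_gen]
    exact le_generateFrom_piiUnionInter (π := fun q : S1 × S2 → ℝ => {s | ∃ a : ℝ, q ⁻¹' Set.Ioi a = s}) (((fun g : S1 → ℝ => g ∘ Prod.fst) '' C1) ∪ ((fun g : S2 → ℝ => g ∘ Prod.snd) '' C2))
      (Set.mem_union_left _ ⟨g, hg, rfl⟩)
  · rw [MeasurableSpace.comap_iSup]
    refine iSup_le fun g => ?_
    rw [MeasurableSpace.comap_iSup]
    refine iSup_le fun hg => ?_
    rw [MeasurableSpace.comap_comp, comap_eq_gen]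
    exact le_generateFrom_piiUnionInter (π := fun q : S1 × S2 → ℝ => {s | ∃ a : ℝ, q ⁻¹' Set.Ioi a = s}) (((fun g : S1 → ℝ => g ∘ Prod.fst) '' C1) ∪ ((fun g : S2 → ℝ => g ∘ Prod.snd) '' C2))
      (Set.mem_union_right _ ⟨g, hg, rfl⟩)
  · refine MeasurableSpace.generateFrom_le ?_
    rintro s ⟨t, htΦ, F, hF, rfl⟩
    refine Finset.measurableSet_biInter _ fun q hq => ?_
    obtain ⟨a, ha⟩ := hF q hq
    rw [← ha]
    rcases htΦ hq with ⟨g, hg, rfl⟩ | ⟨g, hg, rfl⟩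
    · have hle : MeasurableSpace.comap (g ∘ Prod.fst) (inferInstance : MeasurableSpace ℝ) ≤
          (MeasurableSpace.comap Prod.fst
            (⨆ g ∈ C1, MeasurableSpace.comap g (inferInstance : MeasurableSpace ℝ)) ⊔
          MeasurableSpace.comap Prod.snd
            (⨆ g ∈ C2, MeasurableSpace.comap g (inferInstance : MeasurableSpace ℝ))) := by
        rw [← MeasurableSpace.comap_comp]
        exact le_trans (MeasurableSpace.comap_mono (le_iSup₂ (f := fun g (_ : g ∈ C1) =>
          MeasurableSpace.comap g (inferInstance : MeasurableSpace ℝ)) g hg)) le_sup_left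
      exact hle _ (MeasurableSpace.measurableSet_comap.mpr ⟨Set.Ioi a, measurableSet_Ioi, rfl⟩)
    · have hle : MeasurableSpace.comap (g ∘ Prod.snd) (inferInstance : MeasurableSpace ℝ) ≤
          (MeasurableSpace.comap Prod.fst
            (⨆ g ∈ C1, MeasurableSpace.comap g (inferInstance : MeasurableSpace ℝ)) ⊔
          MeasurableSpace.comap Prod.snd
            (⨆ g ∈ C2, MeasurableSpace.comap g (inferInstance : MeasurableSpace ℝ))) := by
        rw [← MeasurableSpace.comap_comp]
        exact le_trans (MeasurableSpace.comap_mono (le_iSup₂ (f := fun g (_ : g ∈ C2) =>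
          MeasurableSpace.comap g (inferInstance : MeasurableSpace ℝ)) g hg)) le_sup_right
      exact hle _ (MeasurableSpace.measurableSet_comap.mpr ⟨Set.Ioi a, measurableSet_Ioi, rfl⟩)

end GEq

section Main

variable {S1 S2 : Type} [mS1 : MeasurableSpace S1] [TopologicalSpace S1] [PolishSpace S1]
  [BorelSpace S1] [mS2 : MeasurableSpace S2] [TopologicalSpace S2] [PolishSpace S2] [BorelSpace S2]

theorem stmt11_aux
    (ν : Measure S2) [IsProbabilityMeasure ν]
    {A : Type}
    (C1 : A → Set (S1 → ℝ)) (C2 : A → Set (S2 → ℝ))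
    (hC1 : ∀ α, ∀ g ∈ C1 α, Continuous g ∧ ∃ M, ∀ x, |g x| ≤ M)
    (hC2 : ∀ α, ∀ g ∈ C2 α, Continuous g ∧ ∃ M, ∀ x, |g x| ≤ M)
    (B1 : A → MeasurableSpace S1) (B2 : A → MeasurableSpace S2)
    (hgen1 : ∀ α, B1 α = ⨆ g ∈ C1 α, MeasurableSpace.comap g (inferInstance : MeasurableSpace ℝ))
    (hgen2 : ∀ α, B2 α = ⨆ g ∈ C2 α, MeasurableSpace.comap g (inferInstance : MeasurableSpace ℝ))
    (μs : ℕ → ProbabilityMeasure (S1 × S2)) (μ : ProbabilityMeasure (S1 × S2))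
    (hmargn : ∀ n, (μs n : Measure (S1 × S2)).map Prod.snd = ν)
    (hmarg : (μ : Measure (S1 × S2)).map Prod.snd = ν)
    (hcompatn : ∀ n (α : A) (h : S2 → ℝ), Measurable h → (∃ C, ∀ x, |h x| ≤ C) →
      (μs n : Measure (S1 × S2))[fun p => h p.2|MeasurableSpace.comap Prod.fst (B1 α) ⊔
          MeasurableSpace.comap Prod.snd (B2 α)]
        =ᵐ[(μs n : Measure (S1 × S2))]
          (μs n : Measure (S1 × S2))[fun p => h p.2|MeasurableSpace.comap Prod.snd (B2 α)])
    (hconv : Tendsto μs atTop (nhds μ)) :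
    ∀ (α : A) (h : S2 → ℝ), Measurable h → (∃ C, ∀ x, |h x| ≤ C) →
      (μ : Measure (S1 × S2))[fun p => h p.2|MeasurableSpace.comap Prod.fst (B1 α) ⊔
          MeasurableSpace.comap Prod.snd (B2 α)]
        =ᵐ[(μ : Measure (S1 × S2))]
          (μ : Measure (S1 × S2))[fun p => h p.2|MeasurableSpace.comap Prod.snd (B2 α)] := by
  intro α h hmeas hbdd
  classical
  letI := TopologicalSpace.upgradeIsCompletelyMetrizable S2
  obtain ⟨Ch, hCh⟩ := hbdd
  -- basic facts about the σ-algebras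
  have hm1 : B1 α ≤ mS1 := by
    rw [hgen1 α]
    exact iSup₂_le fun g hg => measurable_iff_comap_le.mp ((hC1 α g hg).1.measurable)
  have hm2 : B2 α ≤ mS2 := by
    rw [hgen2 α]
    exact iSup₂_le fun g hg => measurable_iff_comap_le.mp ((hC2 α g hg).1.measurable)
  have hGle : (MeasurableSpace.comap Prod.fst (B1 α) ⊔ MeasurableSpace.comap Prod.snd (B2 α)) ≤
      (inferInstance : MeasurableSpace (S1 × S2)) :=
    sup_le ((MeasurableSpace.comap_mono hm1).trans (measurable_iff_comap_le.mp measurable_fst))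
      ((MeasurableSpace.comap_mono hm2).trans (measurable_iff_comap_le.mp measurable_snd))
  have hGeq : (MeasurableSpace.comap Prod.fst (B1 α) ⊔ MeasurableSpace.comap Prod.snd (B2 α)) =
      MeasurableSpace.generateFrom (piiUnionInter
        (fun q : S1 × S2 → ℝ => {s | ∃ a : ℝ, q ⁻¹' Set.Ioi a = s})
        (((fun g : S1 → ℝ => g ∘ Prod.fst) '' C1 α) ∪
          ((fun g : S2 → ℝ => g ∘ Prod.snd) '' C2 α))) := by
    rw [hgen1 α, hgen2 α]; exact G_eq (C1 α) (C2 α)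
  have hπpi : ∀ q : S1 × S2 → ℝ, IsPiSystem {s | ∃ a : ℝ, q ⁻¹' Set.Ioi a = s} := by
    rintro q s ⟨a, rfl⟩ t ⟨b, rfl⟩ -
    exact ⟨max a b, by rw [← Set.preimage_inter, Set.Ioi_inter_Ioi]⟩
  have hΦcont : ∀ q ∈ (((fun g : S1 → ℝ => g ∘ Prod.fst) '' C1 α) ∪
      ((fun g : S2 → ℝ => g ∘ Prod.snd) '' C2 α)), Continuous q := by
    rintro q (⟨g, hg, rfl⟩ | ⟨g, hg, rfl⟩)
    · exact (hC1 α g hg).1.comp continuous_fst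
    · exact (hC2 α g hg).1.comp continuous_snd
  have hΦmeasG : ∀ q ∈ (((fun g : S1 → ℝ => g ∘ Prod.fst) '' C1 α) ∪
      ((fun g : S2 → ℝ => g ∘ Prod.snd) '' C2 α)),
      Measurable[MeasurableSpace.comap Prod.fst (B1 α) ⊔ MeasurableSpace.comap Prod.snd (B2 α)] q := by
    rintro q (⟨g, hg, rfl⟩ | ⟨g, hg, rfl⟩)
    · refine measurable_iff_comap_le.mpr ?_
      rw [← MeasurableSpace.comap_comp]
      refine le_trans (MeasurableSpace.comap_mono ?_) le_sup_left
      rw [hgen1 α]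
      exact le_iSup₂ (f := fun g (_ : g ∈ C1 α) =>
        MeasurableSpace.comap g (inferInstance : MeasurableSpace ℝ)) g hg
    · refine measurable_iff_comap_le.mpr ?_
      rw [← MeasurableSpace.comap_comp]
      refine le_trans (MeasurableSpace.comap_mono ?_) le_sup_right
      rw [hgen2 α]
      exact le_iSup₂ (f := fun g (_ : g ∈ C2 α) =>
        MeasurableSpace.comap g (inferInstance : MeasurableSpace ℝ)) g hg
  -- integrability of h
  have hHint : Integrable h ν :=
    (integrable_const Ch).mono' hmeas.aestronglyMeasurable
      (Filter.Eventually.of_forall fun x => by simpa [Real.norm_eq_abs] using hCh x)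
  -- Step 2 : limit identity for bounded continuous test functions
  have step2 : ∀ (f : S2 →ᵇ ℝ) (u : S1 × S2 → ℝ) (Cu : ℝ), Continuous u →
      Measurable[MeasurableSpace.comap Prod.fst (B1 α) ⊔ MeasurableSpace.comap Prod.snd (B2 α)] u →
      0 ≤ Cu → (∀ p, |u p| ≤ Cu) →
      ∫ p, f p.2 * u p ∂(μ : Measure (S1 × S2)) =
        ∫ p, (ν[⇑f|B2 α]) p.2 * u p ∂(μ : Measure (S1 × S2)) := by
    intro f u Cu hu_cont hu_meas hCu hbu
    have hfν : Integrable ⇑f ν := f.integrable ν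
    have hφint : Integrable (ν[⇑f|B2 α]) ν := integrable_condExp
    have hu_meas' : Measurable u := hu_meas.mono hGle le_rfl
    have husm : StronglyMeasurable[MeasurableSpace.comap Prod.fst (B1 α) ⊔
        MeasurableSpace.comap Prod.snd (B2 α)] u := hu_meas.stronglyMeasurable
    -- identity at level n
    have h1 : ∀ n, ∫ p, f p.2 * u p ∂(μs n : Measure (S1 × S2)) =
        ∫ p, (ν[⇑f|B2 α]) p.2 * u p ∂(μs n : Measure (S1 × S2)) := by
      intro n
      have hκ : ((μs n : Measure (S1 × S2))).map Prod.snd = ν := hmargn n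
      have hsnd_int : Integrable (fun p : S1 × S2 => f p.2) (μs n : Measure (S1 × S2)) :=
        int_snd_aux ν _ hκ _ hfν
      have hmul_int : Integrable (u * fun p : S1 × S2 => f p.2) (μs n : Measure (S1 × S2)) := by
        have := hsnd_int.bdd_mul hu_meas'.aestronglyMeasurable
          (Filter.Eventually.of_forall fun p => by simpa [Real.norm_eq_abs] using hbu p)
        exact this
      have h4 := condExp_mul_of_stronglyMeasurable_left (μ := (μs n : Measure (S1 × S2))) husm hmul_int hsnd_int
      have h2 := hcompatn n α ⇑f f.continuous.measurable
        ⟨‖f‖, fun x => by rw [← Real.norm_eq_abs]; exact f.norm_coe_le_norm x⟩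
      have h3 := condexp_snd_aux ν B2 α hm2 (μs n : Measure (S1 × S2)) hκ ⇑f hfν
      calc ∫ p, f p.2 * u p ∂(μs n : Measure (S1 × S2))
          = ∫ p, (u * fun p : S1 × S2 => f p.2) p ∂(μs n : Measure (S1 × S2)) := by
            simp_rw [Pi.mul_apply, mul_comm]
        _ = ∫ p, ((μs n : Measure (S1 × S2))[u * (fun p : S1 × S2 => f p.2)|
              MeasurableSpace.comap Prod.fst (B1 α) ⊔ MeasurableSpace.comap Prod.snd (B2 α)]) p
              ∂(μs n : Measure (S1 × S2)) := (integral_condExp hGle).symm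
        _ = ∫ p, (ν[⇑f|B2 α]) p.2 * u p ∂(μs n : Measure (S1 × S2)) := by
            refine integral_congr_ae (h4.trans ?_)
            filter_upwards [h2.trans h3] with p hp
            simp only [Pi.mul_apply, hp, mul_comm]
    -- weak convergence of integrals of bounded continuous functions against u
    have hweak : ∀ (w : S2 →ᵇ ℝ), Tendsto (fun n => ∫ p, w p.2 * u p ∂(μs n : Measure (S1 × S2)))
        atTop (nhds (∫ p, w p.2 * u p ∂(μ : Measure (S1 × S2)))) := by
      intro w
      have hWc : Continuous fun p : S1 × S2 => w p.2 * u p :=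
        (w.continuous.comp continuous_snd).mul hu_cont
      have hWb : ∀ p : S1 × S2, ‖w p.2 * u p‖ ≤ ‖w‖ * Cu := fun p => by
        rw [norm_mul]
        exact mul_le_mul (w.norm_coe_le_norm p.2) (by simpa [Real.norm_eq_abs] using hbu p)
          (norm_nonneg _) (norm_nonneg _)
      have := ProbabilityMeasure.tendsto_iff_forall_integral_tendsto.mp hconv
        (BoundedContinuousFunction.ofNormedAddCommGroup _ hWc (‖w‖ * Cu) hWb)
      simpa using this
    -- convergence of the φ-side
    have hT2 : Tendsto (fun n => ∫ p, (ν[⇑f|B2 α]) p.2 * u p ∂(μs n : Measure (S1 × S2)))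
        atTop (nhds (∫ p, (ν[⇑f|B2 α]) p.2 * u p ∂(μ : Measure (S1 × S2)))) := by
      rw [Metric.tendsto_atTop]
      intro ε hε
      have hδpos : 0 < ε / (4 * (Cu + 1)) := by positivity
      obtain ⟨ψ, hψ1, _⟩ := hφint.exists_boundedContinuous_integral_sub_le hδpos
      have hvint : Integrable (fun y => (ν[⇑f|B2 α]) y - ψ y) ν := hφint.sub (ψ.integrable ν)
      have hkey : ∀ (ρ : Measure (S1 × S2)) [IsProbabilityMeasure ρ], ρ.map Prod.snd = ν →
          |∫ p, (ν[⇑f|B2 α]) p.2 * u p ∂ρ - ∫ p, ψ p.2 * u p ∂ρ| ≤ ε / 4 := by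
        intro ρ hρinst hρ
        have e1 : ∫ p, (ν[⇑f|B2 α]) p.2 * u p ∂ρ - ∫ p, ψ p.2 * u p ∂ρ
            = ∫ p, ((ν[⇑f|B2 α]) p.2 - ψ p.2) * u p ∂ρ := by
          rw [← integral_sub (intmul_aux ν ρ hρ _ hφint u hu_cont.measurable.aestronglyMeasurable Cu hbu)
            (intmul_aux ν ρ hρ _ (ψ.integrable ν) u hu_cont.measurable.aestronglyMeasurable Cu hbu)]
          congr 1
          funext p
          ring
        rw [e1]
        have hb := bound_aux ν ρ hρ (fun y => (ν[⇑f|B2 α]) y - ψ y) hvint u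
          hu_cont.measurable.aestronglyMeasurable Cu hCu hbu
        refine hb.trans ?_
        have hint1 : ∫ y, |(ν[⇑f|B2 α]) y - ψ y| ∂ν ≤ ε / (4 * (Cu + 1)) := by
          simpa [Real.norm_eq_abs] using hψ1
        calc Cu * ∫ y, |(ν[⇑f|B2 α]) y - ψ y| ∂ν ≤ Cu * (ε / (4 * (Cu + 1))) :=
              mul_le_mul_of_nonneg_left hint1 hCu
          _ ≤ (Cu + 1) * (ε / (4 * (Cu + 1))) :=
              mul_le_mul_of_nonneg_right (by linarith) hδpos.le
          _ = ε / 4 := by field_simp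
      obtain ⟨N, hN⟩ := Metric.tendsto_atTop.mp (hweak ψ) (ε / 2) (by positivity)
      refine ⟨N, fun n hn => ?_⟩
      have d1 := hkey (μs n : Measure (S1 × S2)) (hmargn n)
      have d3 := hkey (μ : Measure (S1 × S2)) hmarg
      have d2 := hN n hn
      rw [Real.dist_eq] at d2 ⊢
      have tri : ∀ a b c d : ℝ, |a - b| ≤ ε / 4 → |b - c| < ε / 2 → |d - c| ≤ ε / 4 →
          |a - d| < ε := by
        intro a b c d k1 k2 k3
        have t1 : |a - d| ≤ |a - b| + |b - d| := abs_sub_le _ _ _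
        have t2 : |b - d| ≤ |b - c| + |c - d| := abs_sub_le _ _ _
        have t3 : |c - d| = |d - c| := abs_sub_comm _ _
        linarith
      exact tri _ _ _ _ d1 d2 d3
    exact tendsto_nhds_unique (hweak f) (hT2.congr fun n => (h1 n).symm)
  -- Step 3 : Dynkin argument, extending the test from continuous functions to G-measurable sets
  have hMμ : ((μ : Measure (S1 × S2))).map Prod.snd = ν := hmarg
  have step3 : ∀ (f : S2 →ᵇ ℝ) (s : Set (S1 × S2)),
      MeasurableSet[MeasurableSpace.comap Prod.fst (B1 α) ⊔
        MeasurableSpace.comap Prod.snd (B2 α)] s →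
      ∫ p in s, f p.2 ∂(μ : Measure (S1 × S2)) =
        ∫ p in s, (ν[⇑f|B2 α]) p.2 ∂(μ : Measure (S1 × S2)) := by
    intro f
    have hfν : Integrable ⇑f ν := f.integrable ν
    have hφν : Integrable (ν[⇑f|B2 α]) ν := integrable_condExp
    have hfM : Integrable (fun p : S1 × S2 => f p.2) (μ : Measure (S1 × S2)) :=
      int_snd_aux ν _ hMμ _ hfν
    have hφM : Integrable (fun p : S1 × S2 => (ν[⇑f|B2 α]) p.2) (μ : Measure (S1 × S2)) :=
      int_snd_aux ν _ hMμ _ hφν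
    have hd_int : Integrable (fun p : S1 × S2 => f p.2 - (ν[⇑f|B2 α]) p.2)
        (μ : Measure (S1 × S2)) := hfM.sub hφM
    have hzero : ∀ (u : S1 × S2 → ℝ), Continuous u →
        Measurable[MeasurableSpace.comap Prod.fst (B1 α) ⊔
          MeasurableSpace.comap Prod.snd (B2 α)] u → (∀ p, |u p| ≤ 1) →
        ∫ p, (f p.2 - (ν[⇑f|B2 α]) p.2) * u p ∂(μ : Measure (S1 × S2)) = 0 := by
      intro u hc hmG hb
      have hs2 := step2 f u 1 hc hmG zero_le_one hb
      have i1 := intmul_aux ν _ hMμ ⇑f hfν u hc.measurable.aestronglyMeasurable 1 hb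
      have i2 := intmul_aux ν _ hMμ (ν[⇑f|B2 α]) hφν u hc.measurable.aestronglyMeasurable 1 hb
      have : ∫ p, (f p.2 - (ν[⇑f|B2 α]) p.2) * u p ∂(μ : Measure (S1 × S2)) =
          ∫ p, f p.2 * u p ∂(μ : Measure (S1 × S2)) -
          ∫ p, (ν[⇑f|B2 α]) p.2 * u p ∂(μ : Measure (S1 × S2)) := by
        rw [← integral_sub i1 i2]
        congr 1
        funext p
        ring
      rw [this, hs2, sub_self]
    suffices H : ∀ s, MeasurableSet[MeasurableSpace.comap Prod.fst (B1 α) ⊔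
        MeasurableSpace.comap Prod.snd (B2 α)] s →
        ∫ p in s, (f p.2 - (ν[⇑f|B2 α]) p.2) ∂(μ : Measure (S1 × S2)) = 0 by
      intro s hs
      have h2 := H s hs
      rw [integral_sub hfM.integrableOn hφM.integrableOn] at h2
      linarith
    have hempty : ∫ p in (∅ : Set (S1 × S2)), (f p.2 - (ν[⇑f|B2 α]) p.2)
        ∂(μ : Measure (S1 × S2)) = 0 := by simp
    refine fun s hs => MeasurableSpace.induction_on_inter
      (m := MeasurableSpace.comap Prod.fst (B1 α) ⊔ MeasurableSpace.comap Prod.snd (B2 α))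
      (C := fun s _ => ∫ p in s, (f p.2 - (ν[⇑f|B2 α]) p.2) ∂(μ : Measure (S1 × S2)) = 0)
      hGeq (isPiSystem_piiUnionInter _ hπpi _) hempty ?_ ?_ ?_ s hs
    · -- basic sets
      rintro s ⟨t, htΦ, F, hF, rfl⟩
      have hsG : MeasurableSet[MeasurableSpace.comap Prod.fst (B1 α) ⊔
          MeasurableSpace.comap Prod.snd (B2 α)] (⋂ q ∈ t, F q) := by
        rw [hGeq]
        exact MeasurableSpace.measurableSet_generateFrom ⟨t, htΦ, F, hF, rfl⟩
      have hs' : MeasurableSet (⋂ q ∈ t, F q) := hGle _ hsG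
      choose! aa haa using hF
      set useq : ℕ → S1 × S2 → ℝ :=
        fun k p => ∏ q ∈ t, max 0 (min 1 ((k : ℝ) * (q p - aa q))) with huseq
      have hcont : ∀ k, Continuous (useq k) := by
        intro k
        refine continuous_finset_prod _ fun q hq => ?_
        exact continuous_const.max (continuous_const.min
          (continuous_const.mul ((hΦcont q (htΦ hq)).sub continuous_const)))
      have hmeasG : ∀ k, Measurable[MeasurableSpace.comap Prod.fst (B1 α) ⊔
          MeasurableSpace.comap Prod.snd (B2 α)] (useq k) := by
        intro k
        refine Finset.measurable_prod _ fun q hq => ?_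
        have hq' := hΦmeasG q (htΦ hq)
        exact (measurable_const.max (measurable_const.min
          (measurable_const.mul (hq'.sub measurable_const))))
      have hb01 : ∀ k p, 0 ≤ useq k p ∧ useq k p ≤ 1 := by
        intro k p
        refine ⟨Finset.prod_nonneg fun q _ => le_max_left _ _, ?_⟩
        exact Finset.prod_le_one (fun q _ => le_max_left _ _)
          (fun q _ => max_le zero_le_one (min_le_left _ _))
      have hb : ∀ k p, |useq k p| ≤ 1 := fun k p =>
        abs_le.mpr ⟨by linarith [(hb01 k p).1], (hb01 k p).2⟩
      have hlim : ∀ p, Tendsto (fun k => useq k p) atTop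
          (nhds (Set.indicator (⋂ q ∈ t, F q) (fun _ => (1 : ℝ)) p)) := by
        intro p
        have h1 : Tendsto (fun k : ℕ => ∏ q ∈ t, max 0 (min 1 ((k : ℝ) * (q p - aa q)))) atTop
            (nhds (∏ q ∈ t, Set.indicator (Set.Ioi (aa q)) (fun _ => (1 : ℝ)) (q p))) :=
          tendsto_finset_prod _ fun q _ => psi_tendsto (aa q) (q p)
        have heq : ∏ q ∈ t, Set.indicator (Set.Ioi (aa q)) (fun _ => (1 : ℝ)) (q p)
            = Set.indicator (⋂ q ∈ t, F q) (fun _ => (1 : ℝ)) p := by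
          by_cases hp : p ∈ ⋂ q ∈ t, F q
          · rw [Set.indicator_of_mem hp]
            refine Finset.prod_eq_one fun q hq => ?_
            have hpF : p ∈ F q := Set.mem_iInter₂.mp hp q hq
            rw [← haa q hq] at hpF
            exact Set.indicator_of_mem (show q p ∈ Set.Ioi (aa q) from hpF) _
          · rw [Set.indicator_of_notMem hp]
            have hex : ∃ q ∈ t, p ∉ F q := by
              by_contra hcon
              push_neg at hcon
              exact hp (Set.mem_iInter₂.mpr hcon)
            obtain ⟨q, hq, hpq⟩ := hex
            refine Finset.prod_eq_zero hq ?_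
            rw [← haa q hq] at hpq
            exact Set.indicator_of_notMem (show q p ∉ Set.Ioi (aa q) from hpq) _
        rw [← heq]
        exact h1
      have hDCT := MeasureTheory.tendsto_integral_of_dominated_convergence
        (μ := (μ : Measure (S1 × S2)))
        (F := fun k p => (f p.2 - (ν[⇑f|B2 α]) p.2) * useq k p)
        (f := fun p => (f p.2 - (ν[⇑f|B2 α]) p.2) *
          Set.indicator (⋂ q ∈ t, F q) (fun _ => (1 : ℝ)) p)
        (fun p => |f p.2 - (ν[⇑f|B2 α]) p.2|)
        (fun k => hd_int.aestronglyMeasurable.mul (hcont k).measurable.aestronglyMeasurable)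
        hd_int.abs
        (fun k => Filter.Eventually.of_forall fun p => by
          rw [Real.norm_eq_abs, abs_mul]
          exact mul_le_of_le_one_right (abs_nonneg _) (hb k p))
        (Filter.Eventually.of_forall fun p => (hlim p).const_mul _)
      have hz : ∀ k, ∫ p, (f p.2 - (ν[⇑f|B2 α]) p.2) * useq k p ∂(μ : Measure (S1 × S2)) = 0 :=
        fun k => hzero (useq k) (hcont k) (hmeasG k) (hb k)
      simp only [hz] at hDCT
      have hlim0 := tendsto_nhds_unique hDCT tendsto_const_nhds
      rw [← integral_indicator hs']
      have hind : (fun p => Set.indicator (⋂ q ∈ t, F q)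
          (fun p : S1 × S2 => f p.2 - (ν[⇑f|B2 α]) p.2) p) = fun p =>
          (f p.2 - (ν[⇑f|B2 α]) p.2) * Set.indicator (⋂ q ∈ t, F q) (fun _ => (1 : ℝ)) p := by
        funext p
        by_cases hp : p ∈ ⋂ q ∈ t, F q
        · simp [Set.indicator_of_mem hp]
        · simp [Set.indicator_of_notMem hp]
      calc ∫ p, Set.indicator (⋂ q ∈ t, F q)
            (fun p : S1 × S2 => f p.2 - (ν[⇑f|B2 α]) p.2) p ∂(μ : Measure (S1 × S2))
          = ∫ p, (f p.2 - (ν[⇑f|B2 α]) p.2) *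
            Set.indicator (⋂ q ∈ t, F q) (fun _ => (1 : ℝ)) p ∂(μ : Measure (S1 × S2)) := by
            rw [hind]
        _ = 0 := hlim0
    · -- complements
      intro s hsG hCs
      have hs' : MeasurableSet s := hGle _ hsG
      have htot : ∫ p, (f p.2 - (ν[⇑f|B2 α]) p.2) ∂(μ : Measure (S1 × S2)) = 0 := by
        have := hzero (fun _ => 1) continuous_const measurable_const (fun p => by norm_num)
        simpa using this
      have hsplit := integral_add_compl hs' hd_int
      rw [htot] at hsplit
      linarith [hCs, hsplit]
    · -- disjoint unions
      intro F' hdisj hmeasG' hC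
      rw [integral_iUnion (fun i => hGle _ (hmeasG' i)) hdisj hd_int.integrableOn]
      simp only [hC]
      exact tsum_zero
  -- Step 4 : extend from bounded continuous f to the bounded measurable h
  have hφhν : Integrable (ν[h|B2 α]) ν := integrable_condExp
  have hhM : Integrable (fun p : S1 × S2 => h p.2) (μ : Measure (S1 × S2)) :=
    int_snd_aux ν _ hMμ _ hHint
  have hφhM : Integrable (fun p : S1 × S2 => (ν[h|B2 α]) p.2) (μ : Measure (S1 × S2)) :=
    int_snd_aux ν _ hMμ _ hφhν
  have step4 : ∀ s : Set (S1 × S2), MeasurableSet[MeasurableSpace.comap Prod.fst (B1 α) ⊔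
      MeasurableSpace.comap Prod.snd (B2 α)] s →
      ∫ p in s, h p.2 ∂(μ : Measure (S1 × S2)) =
        ∫ p in s, (ν[h|B2 α]) p.2 ∂(μ : Measure (S1 × S2)) := by
    intro s hsG
    have hb : ∀ w : S2 → ℝ, Integrable w ν →
        |∫ p in s, w p.2 ∂(μ : Measure (S1 × S2))| ≤ ∫ y, |w y| ∂ν := by
      intro w hw
      have hwM : Integrable (fun p : S1 × S2 => w p.2) (μ : Measure (S1 × S2)) :=
        int_snd_aux ν _ hMμ _ hw
      calc |∫ p in s, w p.2 ∂(μ : Measure (S1 × S2))|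
          ≤ ∫ p in s, |w p.2| ∂(μ : Measure (S1 × S2)) := by
            simpa [Real.norm_eq_abs] using norm_integral_le_integral_norm
              (μ := (μ : Measure (S1 × S2)).restrict s) (fun p : S1 × S2 => w p.2)
        _ ≤ ∫ p, |w p.2| ∂(μ : Measure (S1 × S2)) :=
            setIntegral_le_integral hwM.abs (Filter.Eventually.of_forall fun p => abs_nonneg _)
        _ = ∫ y, |w y| ∂ν := integral_snd_aux ν _ hMμ _ hw.abs.aestronglyMeasurable
    refine eq_of_forall_dist_le fun ε hε => ?_
    obtain ⟨fb, hfb1, _⟩ := hHint.exists_boundedContinuous_integral_sub_le (half_pos hε)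
    have hfbν : Integrable ⇑fb ν := fb.integrable ν
    have hvν : Integrable (fun y => h y - fb y) ν := hHint.sub hfbν
    have hvbound : ∫ y, |h y - fb y| ∂ν ≤ ε / 2 := by
      simpa [Real.norm_eq_abs] using hfb1
    have hstep3 := step3 fb s hsG
    have hfbM : Integrable (fun p : S1 × S2 => fb p.2) (μ : Measure (S1 × S2)) :=
      int_snd_aux ν _ hMμ _ hfbν
    have hφfbM : Integrable (fun p : S1 × S2 => (ν[⇑fb|B2 α]) p.2) (μ : Measure (S1 × S2)) :=
      int_snd_aux ν _ hMμ _ integrable_condExp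
    -- first difference
    have e1 : ∫ p in s, h p.2 ∂(μ : Measure (S1 × S2)) -
        ∫ p in s, fb p.2 ∂(μ : Measure (S1 × S2)) =
        ∫ p in s, (h p.2 - fb p.2) ∂(μ : Measure (S1 × S2)) :=
      (integral_sub hhM.integrableOn hfbM.integrableOn).symm
    -- second difference
    have hae : (fun p : S1 × S2 => (ν[h|B2 α]) p.2 - (ν[⇑fb|B2 α]) p.2)
        =ᵐ[(μ : Measure (S1 × S2))] fun p => (ν[fun y => h y - fb y|B2 α]) p.2 := by
      have hν : (fun y => (ν[h|B2 α]) y - (ν[⇑fb|B2 α]) y)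
          =ᵐ[ν] ν[fun y => h y - fb y|B2 α] := by
        filter_upwards [condExp_sub (μ := ν) (m := B2 α) hHint hfbν] with y hy
        have hrfl : (ν[fun y => h y - fb y|B2 α]) y = (ν[h - ⇑fb|B2 α]) y := rfl
        rw [hrfl, hy]
        rfl
      have hν' : ∀ᵐ y ∂((μ : Measure (S1 × S2)).map Prod.snd),
          (ν[h|B2 α]) y - (ν[⇑fb|B2 α]) y = (ν[fun y => h y - fb y|B2 α]) y := by
        rw [hMμ]
        exact hν
      have := MeasureTheory.ae_of_ae_map measurable_snd.aemeasurable hν'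
      filter_upwards [this] with p hp
      exact hp
    have e2 : ∫ p in s, (ν[h|B2 α]) p.2 ∂(μ : Measure (S1 × S2)) -
        ∫ p in s, (ν[⇑fb|B2 α]) p.2 ∂(μ : Measure (S1 × S2)) =
        ∫ p in s, (ν[fun y => h y - fb y|B2 α]) p.2 ∂(μ : Measure (S1 × S2)) := by
      rw [← integral_sub hφhM.integrableOn hφfbM.integrableOn]
      exact setIntegral_congr_ae₀ (hGle _ hsG).nullMeasurableSet
        (hae.mono fun p hp _ => hp)
    have hbound1 : |∫ p in s, (h p.2 - fb p.2) ∂(μ : Measure (S1 × S2))| ≤ ε / 2 :=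
      (hb _ hvν).trans hvbound
    have hbound2 : |∫ p in s, (ν[fun y => h y - fb y|B2 α]) p.2
        ∂(μ : Measure (S1 × S2))| ≤ ε / 2 := by
      refine (hb _ integrable_condExp).trans ?_
      exact (integral_abs_condExp_le _).trans hvbound
    rw [Real.dist_eq]
    have hdiff : ∫ p in s, h p.2 ∂(μ : Measure (S1 × S2)) -
        ∫ p in s, (ν[h|B2 α]) p.2 ∂(μ : Measure (S1 × S2)) =
        (∫ p in s, (h p.2 - fb p.2) ∂(μ : Measure (S1 × S2))) -
        ∫ p in s, (ν[fun y => h y - fb y|B2 α]) p.2 ∂(μ : Measure (S1 × S2)) := by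
      rw [← e1, ← e2, hstep3]
      ring
    rw [hdiff]
    calc |(∫ p in s, (h p.2 - fb p.2) ∂(μ : Measure (S1 × S2))) -
        ∫ p in s, (ν[fun y => h y - fb y|B2 α]) p.2 ∂(μ : Measure (S1 × S2))|
        ≤ |∫ p in s, (h p.2 - fb p.2) ∂(μ : Measure (S1 × S2))| +
          |∫ p in s, (ν[fun y => h y - fb y|B2 α]) p.2 ∂(μ : Measure (S1 × S2))| :=
          abs_sub _ _
      _ ≤ ε := by linarith
  -- Step 5 : conclude via uniqueness of conditional expectation
  have hsm : AEStronglyMeasurable[MeasurableSpace.comap Prod.fst (B1 α) ⊔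
      MeasurableSpace.comap Prod.snd (B2 α)] (fun p : S1 × S2 => (ν[h|B2 α]) p.2)
      (μ : Measure (S1 × S2)) := by
    refine StronglyMeasurable.aestronglyMeasurable ?_
    have h1 : StronglyMeasurable[MeasurableSpace.comap Prod.snd (B2 α)]
        (fun p : S1 × S2 => (ν[h|B2 α]) p.2) :=
      (stronglyMeasurable_condExp (f := h) (m := B2 α) (μ := ν)).comp_measurable
        (measurable_iff_comap_le.mpr le_rfl)
    exact h1.mono le_sup_right
  have huniq : (fun p : S1 × S2 => (ν[h|B2 α]) p.2) =ᵐ[(μ : Measure (S1 × S2))]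
      (μ : Measure (S1 × S2))[fun p => h p.2|MeasurableSpace.comap Prod.fst (B1 α) ⊔
        MeasurableSpace.comap Prod.snd (B2 α)] :=
    ae_eq_condExp_of_forall_setIntegral_eq hGle hhM (fun s _ _ => hφhM.integrableOn)
      (fun s hs _ => (step4 s hs).symm) hsm
  have hA := condexp_snd_aux ν B2 α hm2 (μ : Measure (S1 × S2)) hMμ h hHint
  exact huniq.symm.trans hA.symm

end Main

/-- Lemma 3.2 of Kurtz: when the σ-algebras of the compatibility structure are
generated by bounded continuous functions, compatibility passes to limits in
distribution (with the `Y`-marginal fixed). -/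
theorem stmt11
    {S1 S2 : Type} [mS1 : MeasurableSpace S1] [TopologicalSpace S1] [PolishSpace S1] [BorelSpace S1]
    [mS2 : MeasurableSpace S2] [TopologicalSpace S2] [PolishSpace S2] [BorelSpace S2]
    (ν : Measure S2) [IsProbabilityMeasure ν]
    {A : Type}
    (C1 : A → Set (S1 → ℝ)) (C2 : A → Set (S2 → ℝ))
    (hC1 : ∀ α, ∀ g ∈ C1 α, Continuous g ∧ ∃ M, ∀ x, |g x| ≤ M)
    (hC2 : ∀ α, ∀ g ∈ C2 α, Continuous g ∧ ∃ M, ∀ x, |g x| ≤ M)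
    (B1 : A → MeasurableSpace S1) (B2 : A → MeasurableSpace S2)
    (hgen1 : ∀ α, B1 α = ⨆ g ∈ C1 α, MeasurableSpace.comap g (inferInstance : MeasurableSpace ℝ))
    (hgen2 : ∀ α, B2 α = ⨆ g ∈ C2 α, MeasurableSpace.comap g (inferInstance : MeasurableSpace ℝ))
    (μs : ℕ → ProbabilityMeasure (S1 × S2)) (μ : ProbabilityMeasure (S1 × S2))
    (hmargn : ∀ n, (μs n : Measure (S1 × S2)).map Prod.snd = ν)
    (hmarg : (μ : Measure (S1 × S2)).map Prod.snd = ν)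
    -- each X_n is C-compatible with Y (compatibility is a distributional property,
    -- stated for the canonical pair (fst, snd) under the law of (X_n, Y))
    (hcompatn : ∀ n (α : A) (h : S2 → ℝ), Measurable h → (∃ C, ∀ x, |h x| ≤ C) →
      (μs n : Measure (S1 × S2))[fun p => h p.2|MeasurableSpace.comap Prod.fst (B1 α) ⊔
          MeasurableSpace.comap Prod.snd (B2 α)]
        =ᵐ[(μs n : Measure (S1 × S2))]
          (μs n : Measure (S1 × S2))[fun p => h p.2|MeasurableSpace.comap Prod.snd (B2 α)])
    -- (X_n, Y) ⇒ (X, Y)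
    (hconv : Tendsto μs atTop (nhds μ)) :
    -- X is C-compatible with Y
    ∀ (α : A) (h : S2 → ℝ), Measurable h → (∃ C, ∀ x, |h x| ≤ C) →
      (μ : Measure (S1 × S2))[fun p => h p.2|MeasurableSpace.comap Prod.fst (B1 α) ⊔
          MeasurableSpace.comap Prod.snd (B2 α)]
        =ᵐ[(μ : Measure (S1 × S2))]
          (μ : Measure (S1 × S2))[fun p => h p.2|MeasurableSpace.comap Prod.snd (B2 α)] :=
  stmt11_aux ν C1 C2 hC1 hC2 B1 B2 hgen1 hgen2 μs μ hmargn hmarg hcompatn hconv
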